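/- Let D be any convex set of n×n density matrices. If ρ₁ ∈ D and ρ₂ ∈ D both maximize the von Neumann entropy S over D (i.e. S(ρ₁) ≥ S(ρ) and S(ρ₂) ≥ S(ρ) for every ρ ∈ D), then ρ₁ = ρ₂: the entropy-maximizing state subject to the constraints, if it exists, is unique. -/

import Mathlib

open scoped ComplexOrder

/-- The function `s(p) = −p·log p` for `p > 0`, `s(p) = 0` otherwise. -/
noncomputable def sfun (p : ℝ) : ℝ := if 0 < p then -p * Real.log p else 0

/-- An `n×n` complex matrix is a density matrix if it is Hermitian positive
semidefinite with trace one. -/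
def IsDensityMatrix {n : ℕ} (ρ : Matrix (Fin n) (Fin n) ℂ) : Prop :=
  ρ.PosSemidef ∧ ρ.trace = 1

/-- The von Neumann entropy `S(ρ) = Σ_k s(λ_k)` of a Hermitian matrix, where the
`λ_k` are its eigenvalues listed with multiplicity (junk value `0` otherwise). -/
noncomputable def vnEntropy {n : ℕ} (ρ : Matrix (Fin n) (Fin n) ℂ) : ℝ :=
  if h : ρ.IsHermitian then ∑ k, sfun (h.eigenvalues k) else 0

lemma sfun_eq {p : ℝ} (hp : 0 ≤ p) : sfun p = Real.negMulLog p := by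
  rcases eq_or_lt_of_le hp with h | h
  · simp [sfun, ← h]
  · simp [sfun, h, Real.negMulLog]

lemma strictConcaveOn_sfun : StrictConcaveOn ℝ (Set.Ici (0:ℝ)) sfun := by
  refine ⟨convex_Ici 0, fun x hx y hy hxy a b ha hb hab => ?_⟩
  have hmem : a • x + b • y ∈ Set.Ici (0:ℝ) := (convex_Ici 0) hx hy ha.le hb.le hab
  rw [sfun_eq hx, sfun_eq hy, sfun_eq hmem]
  exact Real.strictConcaveOn_negMulLog.2 hx hy hxy ha hb hab

lemma concaveOn_sfun : ConcaveOn ℝ (Set.Ici (0:ℝ)) sfun := strictConcaveOn_sfun.concaveOn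

/-- entry formula for U * diagonal d * star U -/
lemma conj_diag_apply {n : ℕ} (U : Matrix (Fin n) (Fin n) ℂ) (lam : Fin n → ℝ) (k l : Fin n) :
    (U * Matrix.diagonal (fun j => (lam j : ℂ)) * star U) k l
      = ∑ j, U k j * (lam j : ℂ) * (starRingEnd ℂ) (U l j) := by
  rw [Matrix.mul_apply]
  refine Finset.sum_congr rfl fun j _ => ?_
  rw [Matrix.mul_diagonal, Matrix.star_apply, RCLike.star_def]

lemma key {n : ℕ} (W ρ : Matrix (Fin n) (Fin n) ℂ)
    (hWl : star W * W = 1) (hWr : W * star W = 1) (hρ : ρ.PosSemidef) :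
    ∃ a : Fin n → ℝ, (∀ k, 0 ≤ a k) ∧
      (∀ k, (star W * ρ * W) k k = (a k : ℂ)) ∧
      vnEntropy ρ ≤ ∑ k, sfun (a k) ∧
      (vnEntropy ρ = ∑ k, sfun (a k) →
        star W * ρ * W = Matrix.diagonal (fun k => (a k : ℂ))) := by
  classical
  have hH : ρ.IsHermitian := hρ.isHermitian
  set V : Matrix (Fin n) (Fin n) ℂ := (hH.eigenvectorUnitary : Matrix (Fin n) (Fin n) ℂ) with hV
  have hVmem := (hH.eigenvectorUnitary).2
  have hVl : star V * V = 1 := Matrix.mem_unitaryGroup_iff'.mp hVmem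
  have hVr : V * star V = 1 := Matrix.mem_unitaryGroup_iff.mp hVmem
  set lam : Fin n → ℝ := hH.eigenvalues with hlam
  have hlam0 : ∀ j, 0 ≤ lam j := fun j => hρ.eigenvalues_nonneg j
  set U : Matrix (Fin n) (Fin n) ℂ := star W * V with hU
  have hstarU : star U = star V * W := by rw [hU, star_mul, star_star]
  have hUr : U * star U = 1 := by
    rw [hU, hstarU, Matrix.mul_assoc, ← Matrix.mul_assoc V, hVr, Matrix.one_mul, hWl]
  have hUl : star U * U = 1 := by
    rw [hU, hstarU, Matrix.mul_assoc, ← Matrix.mul_assoc W, hWr, Matrix.one_mul, hVl]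
  have hspec : ρ = V * Matrix.diagonal (fun j => (lam j : ℂ)) * star V := by
    have := hH.spectral_theorem
    rw [Unitary.conjStarAlgAut_apply] at this
    exact this
  have hconj : star W * ρ * W = U * Matrix.diagonal (fun j => (lam j : ℂ)) * star U := by
    rw [hspec, hU, hstarU]
    simp only [Matrix.mul_assoc]
  set M : Fin n → Fin n → ℝ := fun k j => Complex.normSq (U k j) with hM
  have hM0 : ∀ k j, 0 ≤ M k j := fun k j => Complex.normSq_nonneg _
  set a : Fin n → ℝ := fun k => ∑ j, M k j * lam j with ha
  have hrow : ∀ k, ∑ j, M k j = 1 := by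
    intro k
    have h1 : (U * star U) k k = 1 := by rw [hUr, Matrix.one_apply_eq]
    rw [Matrix.mul_apply] at h1
    have : ∀ j, U k j * (star U) j k = (M k j : ℂ) := by
      intro j
      rw [Matrix.star_apply, RCLike.star_def, Complex.mul_conj]
    rw [Finset.sum_congr rfl fun j _ => this j] at h1
    exact_mod_cast h1
  have hcol : ∀ j, ∑ k, M k j = 1 := by
    intro j
    have h1 : (star U * U) j j = 1 := by rw [hUl, Matrix.one_apply_eq]
    rw [Matrix.mul_apply] at h1
    have : ∀ k, (star U) j k * U k j = (M k j : ℂ) := by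
      intro k
      rw [Matrix.star_apply, RCLike.star_def, mul_comm, Complex.mul_conj]
    rw [Finset.sum_congr rfl fun k _ => this k] at h1
    exact_mod_cast h1
  have ha0 : ∀ k, 0 ≤ a k := fun k =>
    Finset.sum_nonneg fun j _ => mul_nonneg (hM0 k j) (hlam0 j)
  have hentry : ∀ k l, (star W * ρ * W) k l = ∑ j, U k j * (lam j : ℂ) * (starRingEnd ℂ) (U l j) := by
    intro k l
    rw [hconj, conj_diag_apply]
  have hdiag : ∀ k, (star W * ρ * W) k k = (a k : ℂ) := by
    intro k
    rw [hentry k k]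
    have : ∀ j, U k j * (lam j : ℂ) * (starRingEnd ℂ) (U k j) = ((M k j * lam j : ℝ) : ℂ) := by
      intro j
      rw [mul_comm (U k j) ((lam j : ℂ)), mul_assoc, Complex.mul_conj]
      push_cast
      ring
    rw [Finset.sum_congr rfl fun j _ => this j, ha]
    push_cast
    ring_nf
  have hvn : vnEntropy ρ = ∑ j, sfun (lam j) := dif_pos hH
  -- Jensen per row
  have hjen : ∀ k, ∑ j, M k j * sfun (lam j) ≤ sfun (a k) := by
    intro k
    have := concaveOn_sfun.le_map_sum (t := Finset.univ)
      (fun j _ => hM0 k j) (hrow k) (fun j _ => hlam0 j)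
    simpa [smul_eq_mul, ha] using this
  have hswap : ∑ k, ∑ j, M k j * sfun (lam j) = ∑ j, sfun (lam j) := by
    rw [Finset.sum_comm]
    refine Finset.sum_congr rfl fun j _ => ?_
    rw [← Finset.sum_mul, hcol j, one_mul]
  have hle : vnEntropy ρ ≤ ∑ k, sfun (a k) := by
    rw [hvn, ← hswap]
    exact Finset.sum_le_sum fun k _ => hjen k
  refine ⟨a, ha0, hdiag, hle, ?_⟩
  intro heq
  -- termwise equality in Jensen
  have hterm : ∀ k, sfun (a k) = ∑ j, M k j * sfun (lam j) := by
    intro k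
    have hsum : ∑ k, ∑ j, M k j * sfun (lam j) = ∑ k, sfun (a k) := by
      rw [hswap, ← hvn, heq]
    have := (Finset.sum_eq_sum_iff_of_le (fun k _ => hjen k)).mp hsum k (Finset.mem_univ k)
    exact this.symm
  -- equality case of Jensen: eigenvalues constant on each row support
  have hconst : ∀ k j, M k j ≠ 0 → (lam j : ℝ) = a k := by
    intro k j hne
    have hiff := strictConcaveOn_sfun.map_sum_eq_iff' (t := Finset.univ)
      (w := M k) (p := lam) (fun j _ => hM0 k j) (hrow k) (fun j _ => hlam0 j)
    have heqk : sfun (∑ j, M k j • lam j) = ∑ j, M k j • sfun (lam j) := by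
      simpa [smul_eq_mul, ha] using (hterm k)
    have := hiff.mp heqk j (Finset.mem_univ j) hne
    simpa [smul_eq_mul, ha] using this
  -- conclude diagonality
  ext k l
  rw [hentry k l]
  have hterm2 : ∀ j, U k j * (lam j : ℂ) * (starRingEnd ℂ) (U l j)
      = (a k : ℂ) * (U k j * (starRingEnd ℂ) (U l j)) := by
    intro j
    by_cases h : U k j = 0
    · simp [h]
    · have : M k j ≠ 0 := by simpa [hM, Complex.normSq_eq_zero] using h
      rw [hconst k j this]
      ring
  rw [Finset.sum_congr rfl fun j _ => hterm2 j, ← Finset.mul_sum]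
  have : ∑ j, U k j * (starRingEnd ℂ) (U l j) = (1 : Matrix (Fin n) (Fin n) ℂ) k l := by
    rw [← hUr, Matrix.mul_apply]
    exact Finset.sum_congr rfl fun j _ => by rw [Matrix.star_apply, RCLike.star_def]
  rw [this]
  by_cases hkl : k = l
  · subst hkl; simp
  · simp [Matrix.one_apply_ne hkl, Matrix.diagonal_apply_ne _ hkl]

/-- on any convex set `D` of density matrices, an entropy maximizer is
unique: if `ρ₁, ρ₂ ∈ D` both maximize the von Neumann entropy over `D`, then
`ρ₁ = ρ₂`. -/
theorem entropy_maximizer_unique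
    {n : ℕ} (D : Set (Matrix (Fin n) (Fin n) ℂ))
    (hconv : Convex ℝ D) (hdens : ∀ ρ ∈ D, IsDensityMatrix ρ)
    (ρ₁ ρ₂ : Matrix (Fin n) (Fin n) ℂ) (h₁ : ρ₁ ∈ D) (h₂ : ρ₂ ∈ D)
    (hmax₁ : ∀ ρ ∈ D, vnEntropy ρ ≤ vnEntropy ρ₁)
    (hmax₂ : ∀ ρ ∈ D, vnEntropy ρ ≤ vnEntropy ρ₂) :
    ρ₁ = ρ₂ := by
  classical
  obtain ⟨hP₁, -⟩ := hdens ρ₁ h₁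
  obtain ⟨hP₂, -⟩ := hdens ρ₂ h₂
  set σ : Matrix (Fin n) (Fin n) ℂ := (1/2 : ℝ) • ρ₁ + (1/2 : ℝ) • ρ₂ with hσdef
  have hσD : σ ∈ D := hconv h₁ h₂ (by norm_num) (by norm_num) (by norm_num)
  obtain ⟨hPσ, -⟩ := hdens σ hσD
  have hHσ : σ.IsHermitian := hPσ.isHermitian
  set W : Matrix (Fin n) (Fin n) ℂ := (hHσ.eigenvectorUnitary : Matrix (Fin n) (Fin n) ℂ) with hW
  have hWmem := (hHσ.eigenvectorUnitary).2
  have hWl : star W * W = 1 := Matrix.mem_unitaryGroup_iff'.mp hWmem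
  have hWr : W * star W = 1 := Matrix.mem_unitaryGroup_iff.mp hWmem
  set μ : Fin n → ℝ := hHσ.eigenvalues with hμdef
  have hμ0 : ∀ k, 0 ≤ μ k := fun k => hPσ.eigenvalues_nonneg k
  have hdiagσ : star W * σ * W = Matrix.diagonal (fun k => (μ k : ℂ)) := by
    have := hHσ.conjStarAlgAut_star_eigenvectorUnitary
    rw [Unitary.conjStarAlgAut_star_apply] at this
    exact this
  obtain ⟨a, ha0, hda, hlea, heqa⟩ := key W ρ₁ hWl hWr hP₁
  obtain ⟨b, hb0, hdb, hleb, heqb⟩ := key W ρ₂ hWl hWr hP₂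
  -- μ is the average of a and b
  have hsplit : star W * σ * W
      = (1/2 : ℝ) • (star W * ρ₁ * W) + (1/2 : ℝ) • (star W * ρ₂ * W) := by
    rw [hσdef]
    rw [Matrix.mul_add, Matrix.add_mul, Matrix.mul_smul, Matrix.mul_smul,
        Matrix.smul_mul, Matrix.smul_mul]
  have hμab : ∀ k, μ k = (1/2) * a k + (1/2) * b k := by
    intro k
    have h1 : (star W * σ * W) k k = (μ k : ℂ) := by
      rw [hdiagσ, Matrix.diagonal_apply_eq]
    have h2 : (star W * σ * W) k k
        = (1/2 : ℝ) • ((a k : ℂ)) + (1/2 : ℝ) • ((b k : ℂ)) := by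
      rw [hsplit]
      simp [Matrix.add_apply, Matrix.smul_apply, hda k, hdb k]
    rw [h1] at h2
    have : (μ k : ℂ) = (((1/2) * a k + (1/2) * b k : ℝ) : ℂ) := by
      rw [h2]; push_cast; rw [Complex.real_smul, Complex.real_smul]; push_cast; ring
    exact_mod_cast this
  -- entropy values
  have hS12 : vnEntropy ρ₂ = vnEntropy ρ₁ := le_antisymm (hmax₁ ρ₂ h₂) (hmax₂ ρ₁ h₁)
  have hSσ : vnEntropy σ = ∑ k, sfun (μ k) := dif_pos hHσ
  -- midpoint concavity per k
  have hmid : ∀ k, (1/2) * sfun (a k) + (1/2) * sfun (b k) ≤ sfun (μ k) := by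
    intro k
    have := concaveOn_sfun.2 (Set.mem_Ici.mpr (ha0 k)) (Set.mem_Ici.mpr (hb0 k))
      (by norm_num : (0:ℝ) ≤ 1/2) (by norm_num : (0:ℝ) ≤ 1/2) (by norm_num)
    rw [hμab k]
    simpa [smul_eq_mul] using this
  have hsummid : ∑ k, ((1/2) * sfun (a k) + (1/2) * sfun (b k)) ≤ ∑ k, sfun (μ k) :=
    Finset.sum_le_sum fun k _ => hmid k
  have hchain : ∑ k, ((1/2) * sfun (a k) + (1/2) * sfun (b k))
      = (1/2) * (∑ k, sfun (a k)) + (1/2) * (∑ k, sfun (b k)) := by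
    rw [Finset.sum_add_distrib, Finset.mul_sum, Finset.mul_sum]
  have hσle : vnEntropy σ ≤ vnEntropy ρ₁ := hmax₁ σ hσD
  -- All the inequalities are equalities
  have hSa : ∑ k, sfun (a k) = vnEntropy ρ₁ := by
    have h1 : vnEntropy ρ₁ ≤ ∑ k, sfun (a k) := hlea
    have h2 : vnEntropy ρ₂ ≤ ∑ k, sfun (b k) := hleb
    have h3 : (1/2) * (∑ k, sfun (a k)) + (1/2) * (∑ k, sfun (b k)) ≤ vnEntropy ρ₁ := by
      rw [← hchain]
      calc _ ≤ ∑ k, sfun (μ k) := hsummid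
        _ = vnEntropy σ := hSσ.symm
        _ ≤ vnEntropy ρ₁ := hσle
    rw [hS12] at h2
    linarith
  have hSb : ∑ k, sfun (b k) = vnEntropy ρ₂ := by
    have h1 : vnEntropy ρ₁ ≤ ∑ k, sfun (a k) := hlea
    have h2 : vnEntropy ρ₂ ≤ ∑ k, sfun (b k) := hleb
    have h3 : (1/2) * (∑ k, sfun (a k)) + (1/2) * (∑ k, sfun (b k)) ≤ vnEntropy ρ₁ := by
      rw [← hchain]
      calc _ ≤ ∑ k, sfun (μ k) := hsummid
        _ = vnEntropy σ := hSσ.symm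
        _ ≤ vnEntropy ρ₁ := hσle
    rw [hS12] at h2 ⊢
    linarith
  -- termwise equality in midpoint
  have hsumeq : ∑ k, ((1/2) * sfun (a k) + (1/2) * sfun (b k)) = ∑ k, sfun (μ k) := by
    have hup : ∑ k, sfun (μ k) ≤ vnEntropy ρ₁ := by rw [← hSσ]; exact hσle
    have : vnEntropy ρ₁ ≤ ∑ k, ((1/2) * sfun (a k) + (1/2) * sfun (b k)) := by
      rw [hchain, hSa, hSb, hS12]; linarith
    linarith
  have hmideq : ∀ k, (1/2) * sfun (a k) + (1/2) * sfun (b k) = sfun (μ k) :=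
    fun k => (Finset.sum_eq_sum_iff_of_le (fun k _ => hmid k)).mp hsumeq k (Finset.mem_univ k)
  -- strict concavity forces a = b
  have hab : ∀ k, a k = b k := by
    intro k
    by_contra hne
    have := strictConcaveOn_sfun.2 (Set.mem_Ici.mpr (ha0 k)) (Set.mem_Ici.mpr (hb0 k))
      hne (by norm_num : (0:ℝ) < 1/2) (by norm_num : (0:ℝ) < 1/2) (by norm_num)
    rw [smul_eq_mul, smul_eq_mul, smul_eq_mul, smul_eq_mul, ← hμab k, hmideq k] at this
    exact lt_irrefl _ this
  -- both conjugates are diagonal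
  have hd1 : star W * ρ₁ * W = Matrix.diagonal (fun k => (a k : ℂ)) := heqa hSa.symm
  have hd2 : star W * ρ₂ * W = Matrix.diagonal (fun k => (b k : ℂ)) := heqb hSb.symm
  have hd12 : star W * ρ₁ * W = star W * ρ₂ * W := by
    have hab' : a = b := funext hab
    rw [hd1, hd2, hab']
  -- cancel the unitaries
  have hcancel : ∀ ρ : Matrix (Fin n) (Fin n) ℂ, W * (star W * ρ * W) * star W = ρ := by
    intro ρ
    calc W * (star W * ρ * W) * star W
        = (W * star W) * ρ * (W * star W) := by
          simp only [Matrix.mul_assoc]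
      _ = ρ := by rw [hWr, Matrix.one_mul, Matrix.mul_one]
  calc ρ₁ = W * (star W * ρ₁ * W) * star W := (hcancel ρ₁).symm
    _ = W * (star W * ρ₂ * W) * star W := by rw [hd12]
    _ = ρ₂ := hcancel ρ₂
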